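/- Let G = (V,E) be a connected finite simple graph with n = |V|, let 𝒢 be the graph obtained from G by the subdivision-path-apex construction, and let c be a natural number. Then G contains an independent set of cardinality at least c if and only if 𝒢 contains a proper stalled subset of cardinality at least (2n+1)·|E| + c. -/

import Mathlib

/-- An empty vertex `v` is forced by the filled set `F` if some filled vertex `u ∈ F`
adjacent to `v` has `v` as its unique neighbor outside `F`. -/
def IsForced {W : Type*} (H : SimpleGraph W) (F : Set W) (v : W) : Prop :=
  v ∉ F ∧ ∃ u, u ∈ F ∧ H.Adj u v ∧ ∀ w, H.Adj u w → w ∉ F → w = v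

/-- An empty vertex `v` is skew forced by `F` if some vertex `u` (filled or not)
adjacent to `v` has `v` as its unique neighbor outside `F`. -/
def IsSkewForced {W : Type*} (H : SimpleGraph W) (F : Set W) (v : W) : Prop :=
  v ∉ F ∧ ∃ u, H.Adj u v ∧ ∀ w, H.Adj u w → w ∉ F → w = v

/-- `F` is stalled if no empty vertex is forced by `F`. -/
def Stalled {W : Type*} (H : SimpleGraph W) (F : Set W) : Prop :=
  ∀ v, ¬ IsForced H F v

/-- `F` is skew stalled if no empty vertex is skew forced by `F`. -/
def SkewStalled {W : Type*} (H : SimpleGraph W) (F : Set W) : Prop :=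
  ∀ v, ¬ IsSkewForced H F v

/-- A set of vertices is independent if its vertices are pairwise non-adjacent. -/
def IndepIn {W : Type*} (H : SimpleGraph W) (U : Set W) : Prop :=
  U.Pairwise fun a b => ¬ H.Adj a b

/-- Vertex set of the subdivision-path-apex construction: the vertices of `G`,
vertices `e^i` for each edge `e` and `0 ≤ i ≤ 2n`, and one apex vertex `ε`. -/
abbrev GVert {V : Type*} [Fintype V] (G : SimpleGraph V) : Type _ :=
  V ⊕ (G.edgeSet × Fin (2 * Fintype.card V + 1)) ⊕ Unit

/-- Generating relation: `v ~ e^0` when `v ∈ e`; `e^i ~ e^{i+1}`; `ε ~ e^0`. -/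
def gRel {V : Type*} [Fintype V] (G : SimpleGraph V) : GVert G → GVert G → Prop
  | Sum.inl v, Sum.inr (Sum.inl (e, i)) => i.val = 0 ∧ v ∈ (e : Sym2 V)
  | Sum.inr (Sum.inl (e, i)), Sum.inr (Sum.inl (e', j)) => e = e' ∧ i.val + 1 = j.val
  | Sum.inr (Sum.inr _), Sum.inr (Sum.inl (_, i)) => i.val = 0
  | _, _ => False

/-- The subdivision-path-apex construction `𝒢`. -/
def GG {V : Type*} [Fintype V] (G : SimpleGraph V) : SimpleGraph (GVert G) :=
  SimpleGraph.fromRel (gRel G)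


open Sum

open Sum

section Aux
variable {V : Type*} [Fintype V] {G : SimpleGraph V}

/-- Path vertex `e^i`. -/
private abbrev PP (e : G.edgeSet) (i : Fin (2 * Fintype.card V + 1)) : GVert G :=
  inr (inl (e, i))

/-- The apex vertex. -/
private abbrev EE : GVert G := inr (inr ())

private lemma adj_PP_PP {e : G.edgeSet} {i j : Fin (2 * Fintype.card V + 1)}
    (h : i.val + 1 = j.val ∨ j.val + 1 = i.val) : (GG G).Adj (PP e i) (PP e j) := by
  have hne : i ≠ j := by
    rintro rfl; omega
  refine (SimpleGraph.fromRel_adj _ _ _).2 ⟨by simpa using hne, ?_⟩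
  rcases h with h | h
  · exact Or.inl (by simp [gRel, h])
  · exact Or.inr (by simp [gRel, h])

private lemma adj_PP_v {e : G.edgeSet} {i : Fin (2 * Fintype.card V + 1)} {v : V}
    (h0 : i.val = 0) (hv : v ∈ (e : Sym2 V)) : (GG G).Adj (PP e i) (inl v) := by
  refine (SimpleGraph.fromRel_adj _ _ _).2 ⟨by simp, Or.inr (by simp [gRel, h0, hv])⟩

private lemma adj_PP_eps {e : G.edgeSet} {i : Fin (2 * Fintype.card V + 1)}
    (h0 : i.val = 0) : (GG G).Adj (PP e i) (EE : GVert G) := by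
  refine (SimpleGraph.fromRel_adj _ _ _).2 ⟨by simp, Or.inr (by simp [gRel, h0])⟩

private lemma adj_PP_cases {e : G.edgeSet} {i : Fin (2 * Fintype.card V + 1)} {w : GVert G}
    (h : (GG G).Adj (PP e i) w) :
    (∃ v, w = inl v ∧ i.val = 0 ∧ v ∈ (e : Sym2 V)) ∨
    (∃ j : Fin (2 * Fintype.card V + 1), w = PP e j ∧
      (i.val + 1 = j.val ∨ j.val + 1 = i.val)) ∨
    (w = (EE : GVert G) ∧ i.val = 0) := by
  rw [GG, SimpleGraph.fromRel_adj] at h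
  obtain ⟨-, h⟩ := h
  rcases w with v | ⟨⟨e', j⟩ | u⟩
  · refine Or.inl ⟨v, rfl, ?_⟩
    simpa [gRel] using h
  · refine Or.inr (Or.inl ⟨j, ?_, ?_⟩)
    · rcases h with ⟨rfl, -⟩ | ⟨rfl, -⟩ <;> rfl
    · rcases h with ⟨-, h⟩ | ⟨-, h⟩
      · exact Or.inl h
      · exact Or.inr h
  · refine Or.inr (Or.inr ⟨by rcases u; rfl, ?_⟩)
    simpa [gRel] using h

private lemma adj_v_cases {v : V} {w : GVert G} (h : (GG G).Adj (inl v) w) :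
    ∃ (e : G.edgeSet) (j : Fin (2 * Fintype.card V + 1)), w = PP e j ∧ j.val = 0 ∧
      v ∈ (e : Sym2 V) := by
  rw [GG, SimpleGraph.fromRel_adj] at h
  obtain ⟨-, h⟩ := h
  rcases w with v' | ⟨⟨e', j⟩ | u⟩
  · simp [gRel] at h
  · exact ⟨e', j, rfl, by simpa [gRel] using h⟩
  · simp [gRel] at h

end Aux

section Consec
open Sum
variable {V : Type*} [Fintype V] {G : SimpleGraph V}

private lemma stalled_no_consec {S : Set (GVert G)} (hst : Stalled (GG G) S) (e : G.edgeSet)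
    {a : Fin (2 * Fintype.card V + 1)} (ha : PP e a ∉ S) :
    ∀ i j : Fin (2 * Fintype.card V + 1), i.val + 1 = j.val →
      PP e i ∈ S → PP e j ∈ S → False := by
  classical
  intro i j hij hi hj
  let Emp : ℕ → Prop := fun m => ∃ h : m < 2 * Fintype.card V + 1, PP e ⟨m, h⟩ ∉ S
  have hex : ∃ m, Emp m := ⟨a.val, a.isLt, by simpa using ha⟩
  obtain ⟨hj₀N, hj₀S⟩ : Emp (Nat.find hex) := Nat.find_spec hex
  set j₀ := Nat.find hex with hj₀def
  have hmin : ∀ m (h : m < 2 * Fintype.card V + 1), m < j₀ → PP e ⟨m, h⟩ ∈ S := by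
    intro m h hm
    by_contra hc
    exact Nat.find_min hex hm ⟨h, hc⟩
  -- Step 1 : j₀ ≤ 1
  have hj₀le : j₀ ≤ 1 := by
    by_contra hcon
    push_neg at hcon
    refine hst (PP e ⟨j₀, hj₀N⟩) ⟨hj₀S, PP e ⟨j₀ - 1, by omega⟩,
      hmin _ _ (by omega), adj_PP_PP (Or.inl (show j₀ - 1 + 1 = j₀ by omega)), ?_⟩
    intro w hw hwS
    rcases adj_PP_cases hw with ⟨v, rfl, h0, -⟩ | ⟨j', rfl, hj'⟩ | ⟨rfl, h0⟩
    · exact absurd h0 (by show ¬ (j₀ - 1 = 0); omega)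
    · rcases hj' with h' | h'
      · have h3 : j' = ⟨j₀, hj₀N⟩ := Fin.ext (show j'.val = j₀ by
          have : j₀ - 1 + 1 = j'.val := h'
          omega)
        rw [h3]
      · exact absurd (hmin j'.val j'.isLt (show j'.val < j₀ by
          have : j'.val + 1 = j₀ - 1 := h'
          omega)) (by simpa using hwS)
    · exact absurd h0 (show ¬ (j₀ - 1 = 0) by omega)
  -- i.val ≥ 1
  have hipos : 0 < i.val := by
    by_contra h0
    have h0 : i.val = 0 := by omega
    refine hj₀S ?_
    rcases (show j₀ = i.val ∨ j₀ = j.val by omega) with h | h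
    · have h3 : (⟨j₀, hj₀N⟩ : Fin _) = i := Fin.ext h
      rw [h3]; exact hi
    · have h3 : (⟨j₀, hj₀N⟩ : Fin _) = j := Fin.ext h
      rw [h3]; exact hj
  have hj₀i : j₀ ≤ i.val - 1 := by
    have : j₀ ≠ i.val := by
      intro h
      refine hj₀S ?_
      have h3 : (⟨j₀, hj₀N⟩ : Fin _) = i := Fin.ext h
      rw [h3]; exact hi
    omega
  set k := Nat.findGreatest Emp (i.val - 1) with hkdef
  have hkE : Emp k := Nat.findGreatest_spec hj₀i ⟨hj₀N, hj₀S⟩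
  have hkle : k ≤ i.val - 1 := Nat.findGreatest_le _
  have hfill : ∀ m (h : m < 2 * Fintype.card V + 1), k < m → m ≤ i.val + 1 →
      PP e ⟨m, h⟩ ∈ S := by
    intro m h hkm hmi
    rcases Nat.lt_or_ge m i.val with hm | hm
    · by_contra hc
      exact Nat.findGreatest_is_greatest hkm (by omega) ⟨h, hc⟩
    · rcases (show m = i.val ∨ m = i.val + 1 by omega) with rfl | rfl
      · have h3 : (⟨i.val, h⟩ : Fin _) = i := Fin.ext rfl
        rw [h3]; exact hi
      · have h3 : (⟨i.val + 1, h⟩ : Fin _) = j := Fin.ext (show i.val + 1 = j.val from hij)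
        rw [h3]; exact hj
  obtain ⟨hkN, hkS⟩ := hkE
  have hkiN : k + 1 < 2 * Fintype.card V + 1 := by omega
  refine hst (PP e ⟨k, hkN⟩) ⟨hkS, PP e ⟨k + 1, hkiN⟩,
    hfill _ _ (by omega) (by omega), adj_PP_PP (Or.inr (show k + 1 = k + 1 from rfl)), ?_⟩
  intro w hw hwS
  rcases adj_PP_cases hw with ⟨v, rfl, h0, -⟩ | ⟨j', rfl, hj'⟩ | ⟨rfl, h0⟩
  · exact absurd h0 (show ¬ (k + 1 = 0) by omega)
  · rcases hj' with h' | h'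
    · have h2 : k + 1 + 1 = j'.val := h'
      exact absurd (hfill j'.val j'.isLt (by omega) (by omega)) hwS
    · have h2 : j'.val + 1 = k + 1 := h'
      have h3 : j' = ⟨k, hkN⟩ := Fin.ext (show j'.val = k by omega)
      rw [h3]
  · exact absurd h0 (show ¬ (k + 1 = 0) by omega)

end Consec

section Count
open Sum
variable {V : Type*} [Fintype V] {G : SimpleGraph V}

private lemma compl_card_of_empty {S : Set (GVert G)} (hst : Stalled (GG G) S)
    (e : G.edgeSet) {a : Fin (2 * Fintype.card V + 1)} (ha : PP e a ∉ S) :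
    Fintype.card V ≤ Sᶜ.ncard := by
  classical
  set n := Fintype.card V with hn
  let A : Set (Fin (2 * n + 1)) := {i | PP e i ∈ S}
  have hA : A.ncard ≤ n + 1 := by
    have h1 : A.ncard ≤ (Set.univ : Set (Fin (n + 1))).ncard := by
      refine Set.ncard_le_ncard_of_injOn
        (fun i : Fin (2 * n + 1) => (⟨i.val / 2, by omega⟩ : Fin (n + 1)))
        (fun x _ => Set.mem_univ _) ?_ Set.finite_univ
      intro i hi i' hi' hii
      have hdiv : i.val / 2 = i'.val / 2 := by
        simpa [Fin.ext_iff] using hii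
      by_contra hne
      have hv : i.val ≠ i'.val := fun h => hne (Fin.ext h)
      rcases (show i.val + 1 = i'.val ∨ i'.val + 1 = i.val by omega) with h | h
      · exact stalled_no_consec hst e ha i i' h hi hi'
      · exact stalled_no_consec hst e ha i' i h hi' hi
    simpa [Set.ncard_univ, Nat.card_eq_fintype_card, Fintype.card_fin] using h1
  have htot : A.ncard + Aᶜ.ncard = 2 * n + 1 := by
    have := Set.ncard_add_ncard_compl A
    simpa using this
  have hAc : n ≤ Aᶜ.ncard := by omega
  have h2 : Aᶜ.ncard ≤ Sᶜ.ncard := by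
    refine Set.ncard_le_ncard_of_injOn (fun i => PP e i) (fun i hi => hi) ?_ (Set.toFinite _)
    intro i _ i' _ h
    simpa [PP, Fin.ext_iff, Prod.ext_iff] using h
  omega

private lemma card_GVert :
    Nat.card (GVert G) = Fintype.card V + (2 * Fintype.card V + 1) * G.edgeSet.ncard + 1 := by
  rw [show (GVert G) = (V ⊕ (G.edgeSet × Fin (2 * Fintype.card V + 1)) ⊕ Unit) from rfl]
  rw [Nat.card_sum, Nat.card_sum, Nat.card_prod, Nat.card_eq_fintype_card (α := V),
    Nat.card_coe_set_eq, Nat.card_eq_fintype_card (α := Fin _), Fintype.card_fin,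
    Nat.card_eq_fintype_card (α := Unit), Fintype.card_unit]
  ring

private lemma ncard_standard (U : Set V) :
    ((inl '' U ∪ (fun p => (inr (inl p) : GVert G)) ''
        (Set.univ : Set (G.edgeSet × Fin (2 * Fintype.card V + 1))))).ncard
      = U.ncard + (2 * Fintype.card V + 1) * G.edgeSet.ncard := by
  classical
  have hdisj : Disjoint (inl '' U)
      ((fun p => (inr (inl p) : GVert G)) '' Set.univ) := by
    rw [Set.disjoint_left]
    rintro x ⟨v, -, rfl⟩ ⟨p, -, h⟩
    exact Sum.inr_ne_inl h
  rw [Set.ncard_union_eq hdisj (Set.toFinite _) (Set.toFinite _),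
    Set.ncard_image_of_injective _ Sum.inl_injective,
    Set.ncard_image_of_injective _ (fun p q h => by
      simpa using h)]
  rw [Set.ncard_univ, Nat.card_prod, Nat.card_coe_set_eq,
    Nat.card_eq_fintype_card (α := Fin _), Fintype.card_fin]
  ring

private lemma exists_endpoint_not_mem {U : Set V} (hU : IndepIn G U) (e : G.edgeSet) :
    ∃ a, a ∈ (e : Sym2 V) ∧ a ∉ U := by
  obtain ⟨s, hs⟩ := e
  induction s using Sym2.ind with
  | _ x y =>
    rw [SimpleGraph.mem_edgeSet] at hs
    by_contra hc
    push_neg at hc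
    have hx : x ∈ U := hc x (by simp)
    have hy : y ∈ U := hc y (by simp)
    exact hU hx hy hs.ne hs

end Count

/-- `G` has an independent set of cardinality at least `c` iff `𝒢` has a
proper stalled subset of cardinality at least `(2n+1)·|E| + c`. -/
theorem indep_iff_proper_stalled {V : Type*} [Fintype V] (G : SimpleGraph V)
    (hG : G.Connected) (c : ℕ) :
    (∃ U : Set V, IndepIn G U ∧ c ≤ U.ncard) ↔
      ∃ S : Set (GVert G), S ≠ Set.univ ∧ Stalled (GG G) S ∧
        (2 * Fintype.card V + 1) * G.edgeSet.ncard + c ≤ S.ncard := by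
  constructor
  · rintro ⟨U, hU, hcU⟩
    refine ⟨inl '' U ∪ (fun p => (inr (inl p) : GVert G)) '' Set.univ, ?_, ?_, ?_⟩
    · -- proper
      intro h
      have hE : (EE : GVert G) ∈ inl '' U ∪ (fun p => (inr (inl p) : GVert G)) '' Set.univ :=
        h.symm ▸ Set.mem_univ _
      rcases hE with ⟨v, -, hv⟩ | ⟨p, -, hp⟩
      · exact Sum.inl_ne_inr hv
      · simp at hp
    · -- stalled
      have hmemP : ∀ (e : G.edgeSet) (i : Fin (2 * Fintype.card V + 1)),
          PP e i ∈ inl '' U ∪ (fun p => (inr (inl p) : GVert G)) '' Set.univ :=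
        fun e i => Or.inr ⟨(e, i), Set.mem_univ _, rfl⟩
      have hmemE : (EE : GVert G) ∉ inl '' U ∪ (fun p => (inr (inl p) : GVert G)) '' Set.univ := by
        rintro (⟨v, -, hv⟩ | ⟨p, -, hp⟩)
        · exact Sum.inl_ne_inr hv
        · simp at hp
      have hmemv : ∀ v : V, (inl v : GVert G) ∈
          (inl '' U ∪ (fun p => (inr (inl p) : GVert G)) '' Set.univ) → v ∈ U := by
        rintro v (⟨v', hv', hEq⟩ | ⟨p, -, hp⟩)
        · cases hEq; exact hv'
        · exact absurd hp (by simp)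
      rintro x ⟨hxS, u, huS, hadj, huniq⟩
      rcases u with v | ⟨⟨e, i⟩ | uu⟩
      · obtain ⟨e, j, rfl, -, -⟩ := adj_v_cases hadj
        exact hxS (hmemP e j)
      · rcases adj_PP_cases hadj with ⟨v, rfl, h0, -⟩ | ⟨j, rfl, -⟩ | ⟨rfl, h0⟩ <;>
        [skip; exact hxS (hmemP e j); skip] <;>
        · obtain ⟨aV, hae, haU⟩ := exists_endpoint_not_mem hU e
          have h1 := huniq EE (adj_PP_eps h0) hmemE
          have h2 := huniq (inl aV) (adj_PP_v h0 hae) (fun h => haU (hmemv aV h))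
          exact Sum.inl_ne_inr (h2.trans h1.symm)
      · rcases uu; exact hmemE huS
    · -- cardinality
      rw [ncard_standard]
      omega
  · rintro ⟨S, hne, hst, hcard⟩
    rcases Nat.lt_or_ge 1 c with hc2 | hc1
    · -- c ≥ 2
      have hK1 : ∀ (e : G.edgeSet) (i : Fin (2 * Fintype.card V + 1)), PP e i ∈ S := by
        by_contra hcon
        push_neg at hcon
        obtain ⟨e, i, hi⟩ := hcon
        have h1 := compl_card_of_empty hst e hi
        have h2 := Set.ncard_add_ncard_compl S
        rw [card_GVert] at h2
        omega
      have hK2 : (EE : GVert G) ∉ S := by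
        intro hε
        have hcl : ∀ u w : V, G.Adj u w → (inl u : GVert G) ∉ S →
            (inl w : GVert G) ∉ S := by
          intro u w huw hu hwmem
          refine hst (inl u) ⟨hu, PP ⟨s(u, w), G.mem_edgeSet.mpr huw⟩ ⟨0, by omega⟩,
            hK1 _ _, adj_PP_v rfl (by simp), ?_⟩
          intro x hx hxS
          rcases adj_PP_cases hx with ⟨v', rfl, -, hv'⟩ | ⟨j', rfl, -⟩ | ⟨rfl, -⟩
          · simp only [Sym2.mem_iff] at hv'
            rcases hv' with rfl | rfl
            · rfl
            · exact absurd hwmem hxS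
          · exact absurd (hK1 _ j') hxS
          · exact absurd hε hxS
        by_cases hall : ∀ v : V, (inl v : GVert G) ∈ S
        · apply hne
          ext x
          simp only [Set.mem_univ, iff_true]
          rcases x with v | ⟨⟨e, i⟩ | uu⟩
          · exact hall v
          · exact hK1 e i
          · rcases uu; exact hε
        · push_neg at hall
          obtain ⟨v₀, hv₀⟩ := hall
          have hallout : ∀ v : V, (inl v : GVert G) ∉ S := by
            have key : ∀ (x y : V) (p : G.Walk x y),
                (inl x : GVert G) ∉ S → (inl y : GVert G) ∉ S := by
              intro x y p
              induction p with
              | nil => exact id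
              | cons h q ih => exact fun hx => ih (hcl _ _ h hx)
            intro v
            obtain ⟨p⟩ := hG.preconnected v₀ v
            exact key _ _ p hv₀
          have hsub : (Set.univ : Set V).ncard ≤ Sᶜ.ncard :=
            Set.ncard_le_ncard_of_injOn (fun v : V => (inl v : GVert G))
              (fun v _ => hallout v) (fun a _ b _ h => by simpa using h) (Set.toFinite _)
          rw [Set.ncard_univ, Nat.card_eq_fintype_card] at hsub
          have h2 := Set.ncard_add_ncard_compl S
          rw [card_GVert] at h2
          omega
      refine ⟨{v | (inl v : GVert G) ∈ S}, ?_, ?_⟩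
      · -- independent
        intro a ha b hb hab hadj
        refine hst EE ⟨hK2, PP ⟨s(a, b), G.mem_edgeSet.mpr hadj⟩ ⟨0, by omega⟩,
          hK1 _ _, adj_PP_eps rfl, ?_⟩
        intro x hx hxS
        rcases adj_PP_cases hx with ⟨v', rfl, -, hv'⟩ | ⟨j', rfl, -⟩ | ⟨rfl, -⟩
        · simp only [Sym2.mem_iff] at hv'
          rcases hv' with rfl | rfl
          · exact absurd ha hxS
          · exact absurd hb hxS
        · exact absurd (hK1 _ j') hxS
        · rfl
      · -- cardinality
        have hSeq : S = inl '' {v | (inl v : GVert G) ∈ S} ∪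
            (fun p => (inr (inl p) : GVert G)) '' Set.univ := by
          ext x
          rcases x with v | ⟨⟨e, i⟩ | uu⟩
          · constructor
            · intro h; exact Or.inl ⟨v, h, rfl⟩
            · rintro (⟨v', hv', hEq⟩ | ⟨p, -, hp⟩)
              · cases hEq; exact hv'
              · exact absurd hp (by simp)
          · exact ⟨fun _ => Or.inr ⟨(e, i), Set.mem_univ _, rfl⟩, fun _ => hK1 e i⟩
          · rcases uu
            constructor
            · intro h; exact absurd h hK2
            · rintro (⟨v', -, hEq⟩ | ⟨p, -, hp⟩)
              · exact (Sum.inl_ne_inr hEq).elim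
              · exact absurd hp (by simp)
        rw [hSeq, ncard_standard] at hcard
        omega
    · -- c ≤ 1
      obtain ⟨v⟩ := hG.nonempty
      exact ⟨{v}, Set.pairwise_singleton _ _, by rw [Set.ncard_singleton]; omega⟩
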